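/- arXiv:2602.22861 — 4 statements merged into one kernel-verified Lean document; each statement's English description precedes it below -/
import Mathlib

section
/- Let n be a natural number and let q be a real polynomial of degree at most n. Then for all real numbers a < b, the endpoint values of q are controlled by its L^2 norm on [a,b] with the explicit trace constant (n+1)^2: both (q(b))^2 ≤ ((n+1)^2/(b-a)) · ∫_a^b (q(x))^2 dx and (q(a))^2 ≤ ((n+1)^2/(b-a)) · ∫_a^b (q(x))^2 dx. -/
open MeasureTheory Polynomial
open Finset intervalIntegral


noncomputable def Mfd (N k : ℕ) : ℝ := ∑ j ∈ range (N+1), (-1:ℝ)^j * (N.choose j) * (j:ℝ)^k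

lemma Mfd_rec (N k : ℕ) : Mfd (N+1) k = -∑ t ∈ range k, (k.choose t : ℝ) * Mfd N t := by
  have h1 : Mfd (N+1) k
      = (∑ j ∈ range (N+1), (-1:ℝ)^(j+1) * ((N.choose j : ℝ) + (N.choose (j+1) : ℝ)) * ((j:ℝ)+1)^k)
        + (0:ℝ)^k := by
    rw [Mfd, Finset.sum_range_succ']
    congr 1
    · apply Finset.sum_congr rfl
      intro j hj
      have : ((N+1).choose (j+1) : ℝ) = (N.choose j : ℝ) + (N.choose (j+1) : ℝ) := by
        rw [Nat.choose_succ_succ]; push_cast; ring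
      rw [this]; push_cast; ring
    · simp
  have hB : (∑ j ∈ range (N+1), (-1:ℝ)^(j+1) * (N.choose (j+1) : ℝ) * ((j:ℝ)+1)^k)
      = Mfd N k - (0:ℝ)^k := by
    have h2 : Mfd N k
        = (∑ j ∈ range N, (-1:ℝ)^(j+1) * (N.choose (j+1) : ℝ) * ((j:ℝ)+1)^k) + (0:ℝ)^k := by
      rw [Mfd, Finset.sum_range_succ']
      congr 1
      · apply Finset.sum_congr rfl; intro j hj; push_cast; ring
      · simp
    rw [Finset.sum_range_succ, h2]
    simp [Nat.choose_succ_self]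
  have expand : ∀ j : ℕ, ((j:ℝ)+1)^k = ∑ t ∈ range (k+1), ((j:ℝ)^t * (k.choose t : ℝ)) := by
    intro j; simpa using add_pow (j:ℝ) 1 k
  have hA : (∑ j ∈ range (N+1), (-1:ℝ)^(j+1) * (N.choose j : ℝ) * ((j:ℝ)+1)^k)
      = -∑ t ∈ range (k+1), (k.choose t : ℝ) * Mfd N t := by
    calc (∑ j ∈ range (N+1), (-1:ℝ)^(j+1) * (N.choose j : ℝ) * ((j:ℝ)+1)^k)
        = ∑ j ∈ range (N+1), ∑ t ∈ range (k+1),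
            (-(k.choose t:ℝ)) * ((-1:ℝ)^j * (N.choose j : ℝ) * (j:ℝ)^t) := by
          apply Finset.sum_congr rfl
          intro j _
          rw [expand, Finset.mul_sum]
          apply Finset.sum_congr rfl
          intro t _
          ring
      _ = ∑ t ∈ range (k+1), (-(k.choose t:ℝ)) * Mfd N t := by
          rw [Finset.sum_comm]
          apply Finset.sum_congr rfl
          intro t _
          rw [Mfd, Finset.mul_sum]
      _ = -∑ t ∈ range (k+1), (k.choose t : ℝ) * Mfd N t := by
          rw [← Finset.sum_neg_distrib]
          apply Finset.sum_congr rfl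
          intro t _
          ring
  have hsplit : (∑ j ∈ range (N+1), (-1:ℝ)^(j+1) * ((N.choose j : ℝ) + (N.choose (j+1) : ℝ)) * ((j:ℝ)+1)^k)
      = (∑ j ∈ range (N+1), (-1:ℝ)^(j+1) * (N.choose j : ℝ) * ((j:ℝ)+1)^k)
        + (∑ j ∈ range (N+1), (-1:ℝ)^(j+1) * (N.choose (j+1) : ℝ) * ((j:ℝ)+1)^k) := by
    rw [← Finset.sum_add_distrib]
    apply Finset.sum_congr rfl
    intro j _
    ring
  rw [h1, hsplit, hA, hB, Finset.sum_range_succ]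
  simp
  ring

lemma choose_two_real (n : ℕ) : (((n+2).choose 2 : ℕ) : ℝ) = (n+2)*(n+1)/2 := by
  induction n with
  | zero => norm_num
  | succ m ih =>
    have : (m+3).choose 2 = (m+2).choose 1 + (m+2).choose 2 := Nat.choose_succ_succ (m+2) 1
    rw [show m+1+2 = m+3 from rfl, this]
    push_cast [ih, Nat.choose_one_right]
    ring

lemma Mfd_val (N : ℕ) : (∀ k, k < N → Mfd N k = 0) ∧ Mfd N N = (-1:ℝ)^N * (N.factorial : ℝ)
    ∧ Mfd N (N+1) = (-1:ℝ)^N * (N.factorial : ℝ) * ((N:ℝ)*((N:ℝ)+1)/2) := by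
  induction N with
  | zero =>
    refine ⟨fun k hk => absurd hk (Nat.not_lt_zero k), ?_, ?_⟩ <;> simp [Mfd]
  | succ N ih =>
    obtain ⟨h0, hN, hN1⟩ := ih
    have key : ∀ k, Mfd (N+1) k = -∑ t ∈ range k, (k.choose t : ℝ) * Mfd N t := Mfd_rec N
    constructor
    · intro k hk
      rw [key]
      have : ∀ t ∈ range k, (k.choose t : ℝ) * Mfd N t = 0 := by
        intro t ht
        rw [h0 t (lt_of_lt_of_le (mem_range.mp ht) (Nat.lt_succ_iff.mp hk))]
        ring
      rw [Finset.sum_eq_zero this]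
      ring
    constructor
    · rw [key, Finset.sum_range_succ]
      have : ∀ t ∈ range N, ((N+1).choose t : ℝ) * Mfd N t = 0 := by
        intro t ht
        rw [h0 t (mem_range.mp ht)]; ring
      rw [Finset.sum_eq_zero this, hN, Nat.choose_succ_self_right]
      push_cast [Nat.factorial_succ]
      ring
    · rw [key, Finset.sum_range_succ, Finset.sum_range_succ]
      have : ∀ t ∈ range N, ((N+2).choose t : ℝ) * Mfd N t = 0 := by
        intro t ht
        rw [h0 t (mem_range.mp ht)]; ring
      rw [Finset.sum_eq_zero this, hN, hN1]
      have c1 : ((N+2).choose (N+1) : ℝ) = (N:ℝ)+2 := by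
        rw [Nat.choose_succ_self_right]; push_cast; ring
      have c2 : ((N+2).choose N : ℝ) = ((N:ℝ)+2)*((N:ℝ)+1)/2 := by
        have hs : (N+2).choose N = (N+2).choose 2 := by
          rw [← Nat.choose_symm (by omega : 2 ≤ N+2)]
          congr 1
        rw [hs, choose_two_real]
      rw [c1, c2]
      push_cast [Nat.factorial_succ]
      ring

lemma fd_eval (N : ℕ) (p : Polynomial ℝ) (h : p.natDegree ≤ N+1) :
    ∑ j ∈ range (N+1), (-1:ℝ)^j * (N.choose j) * p.eval (j:ℝ)
      = (-1:ℝ)^N * (N.factorial : ℝ) * (p.coeff N + p.coeff (N+1) * ((N:ℝ)*((N:ℝ)+1)/2)) := by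
  obtain ⟨h0, hN, hN1⟩ := Mfd_val N
  have hev : ∀ j : ℕ, p.eval (j:ℝ) = ∑ k ∈ range (N+2), p.coeff k * (j:ℝ)^k := by
    intro j
    exact p.eval_eq_sum_range' (lt_of_le_of_lt h (Nat.lt_succ_self _)) _
  calc ∑ j ∈ range (N+1), (-1:ℝ)^j * (N.choose j) * p.eval (j:ℝ)
      = ∑ j ∈ range (N+1), ∑ k ∈ range (N+2), p.coeff k * ((-1:ℝ)^j * (N.choose j) * (j:ℝ)^k) := by
        apply Finset.sum_congr rfl
        intro j _
        rw [hev j, Finset.mul_sum]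
        apply Finset.sum_congr rfl
        intro k _
        ring
    _ = ∑ k ∈ range (N+2), p.coeff k * Mfd N k := by
        rw [Finset.sum_comm]
        apply Finset.sum_congr rfl
        intro k _
        rw [Mfd, Finset.mul_sum]
    _ = _ := by
        rw [Finset.sum_range_succ, Finset.sum_range_succ]
        have : ∀ k ∈ range N, p.coeff k * Mfd N k = 0 := by
          intro k hk
          rw [h0 k (mem_range.mp hk)]; ring
        rw [Finset.sum_eq_zero this, hN, hN1]
        ring

noncomputable def Pp (n : ℕ) : Polynomial ℝ := ∏ i ∈ range (n+1), (X + C ((i:ℝ)+1))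

lemma Pp_monic (n : ℕ) : (Pp n).Monic :=
  monic_prod_of_monic _ _ (fun i _ => monic_X_add_C _)

lemma Pp_natDegree (n : ℕ) : (Pp n).natDegree = n+1 := by
  rw [Pp, natDegree_prod_of_monic _ _ (fun i _ => monic_X_add_C _)]
  have : ∀ i ∈ range (n+1), (X + C ((i:ℝ)+1)).natDegree = 1 := fun i _ => natDegree_X_add_C _
  rw [Finset.sum_congr rfl this]
  simp

lemma Pp_coeff_top (n : ℕ) : (Pp n).coeff (n+1) = 1 := by
  have := (Pp_monic n).coeff_natDegree
  rwa [Pp_natDegree] at this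

lemma Pp_coeff_sub (n : ℕ) : (Pp n).coeff n = ((n:ℝ)+1)*((n:ℝ)+2)/2 := by
  induction n with
  | zero => simp [Pp]
  | succ m ih =>
    have hstep : Pp (m+1) = Pp m * (X + C ((m:ℝ)+2)) := by
      have hc : (((m+1:ℕ)):ℝ)+1 = (m:ℝ)+2 := by push_cast; ring
      rw [Pp, Pp, Finset.prod_range_succ, hc]
    rw [hstep, mul_add, coeff_add, coeff_mul_X, coeff_mul_C, ih, Pp_coeff_top]
    push_cast
    ring

noncomputable def Kco (n j : ℕ) : ℝ :=
  (-1:ℝ)^(n+j) * (n.choose j) * ((Pp n).eval (j:ℝ)) / (n.factorial : ℝ)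

lemma factorial_ne : ∀ n : ℕ, ((n.factorial : ℝ)) ≠ 0 := by
  intro n; exact_mod_cast Nat.factorial_ne_zero n

lemma key (n m : ℕ) (hm : m ≤ n) :
    ∑ j ∈ range (n+1), Kco n j / ((m:ℝ)+(j:ℝ)+1) = 1 := by
  set Q : Polynomial ℝ := ∏ i ∈ (range (n+1)).erase m, (X + C ((i:ℝ)+1)) with hQ
  have hmem : m ∈ range (n+1) := mem_range.mpr (Nat.lt_succ_of_le hm)
  have hfac : Pp n = (X + C ((m:ℝ)+1)) * Q := by
    rw [Pp, ← Finset.mul_prod_erase _ _ hmem]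
  have hQmonic : Q.Monic := monic_prod_of_monic _ _ (fun i _ => monic_X_add_C _)
  have hQdeg : Q.natDegree = n := by
    rw [hQ, natDegree_prod_of_monic _ _ (fun i _ => monic_X_add_C _)]
    have : ∀ i ∈ (range (n+1)).erase m, (X + C ((i:ℝ)+1)).natDegree = 1 :=
      fun i _ => natDegree_X_add_C _
    rw [Finset.sum_congr rfl this]
    simp [Finset.card_erase_of_mem hmem]
  have hQcoeffn : Q.coeff n = 1 := by
    have := hQmonic.coeff_natDegree; rwa [hQdeg] at this
  have hQcoeffn1 : Q.coeff (n+1) = 0 :=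
    coeff_eq_zero_of_natDegree_lt (by rw [hQdeg]; omega)
  have step : ∑ j ∈ range (n+1), Kco n j / ((m:ℝ)+(j:ℝ)+1)
      = ((-1:ℝ)^n / (n.factorial : ℝ)) *
        ∑ j ∈ range (n+1), (-1:ℝ)^j * (n.choose j) * Q.eval (j:ℝ) := by
    rw [Finset.mul_sum]
    apply Finset.sum_congr rfl
    intro j _
    have hpos : ((m:ℝ)+(j:ℝ)+1) ≠ 0 := by positivity
    have heval : (Pp n).eval (j:ℝ) = ((m:ℝ)+(j:ℝ)+1) * Q.eval (j:ℝ) := by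
      rw [hfac]; simp only [eval_mul, eval_add, eval_X, eval_C]; ring
    rw [Kco, heval, pow_add]
    field_simp
  rw [step, fd_eval n Q (by rw [hQdeg]; omega),
      hQcoeffn, hQcoeffn1]
  have h2 : (-1:ℝ)^n * (-1:ℝ)^n = 1 := by
    rw [← pow_add, ← two_mul, pow_mul]; norm_num
  field_simp
  nlinarith [h2]

lemma Ksum (n : ℕ) : ∑ j ∈ range (n+1), Kco n j = ((n:ℝ)+1)^2 := by
  have step : ∑ j ∈ range (n+1), Kco n j
      = ((-1:ℝ)^n / (n.factorial : ℝ)) *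
        ∑ j ∈ range (n+1), (-1:ℝ)^j * (n.choose j) * (Pp n).eval (j:ℝ) := by
    rw [Finset.mul_sum]
    apply Finset.sum_congr rfl
    intro j _
    rw [Kco, pow_add]
    field_simp
  rw [step, fd_eval n (Pp n) (le_of_eq (Pp_natDegree n)), Pp_coeff_sub, Pp_coeff_top]
  have h2 : (-1:ℝ)^n * (-1:ℝ)^n = 1 := by
    rw [← pow_add, ← two_mul, pow_mul]; norm_num
  field_simp
  linear_combination (2*((n:ℝ)+1)) * h2

noncomputable def Kf (n : ℕ) : ℝ → ℝ := fun x => ∑ j ∈ range (n+1), Kco n j * x^j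
noncomputable def Kpoly (n : ℕ) : Polynomial ℝ := ∑ j ∈ range (n+1), C (Kco n j) * X^j

lemma Kpoly_eval (n : ℕ) (x : ℝ) : (Kpoly n).eval x = Kf n x := by
  simp [Kpoly, Kf, eval_finset_sum]

lemma Kpoly_natDegree_le (n : ℕ) : (Kpoly n).natDegree ≤ n := by
  apply natDegree_sum_le_of_forall_le
  intro j hj
  exact le_trans (natDegree_C_mul_le _ _) (by simpa using Nat.lt_succ_iff.mp (mem_range.mp hj))

lemma Kf_cont (n : ℕ) : Continuous (Kf n) := by
  have : Kf n = fun x => (Kpoly n).eval x := by funext x; rw [Kpoly_eval]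
  rw [this]; exact (Kpoly n).continuous

lemma reprn (n : ℕ) (p : Polynomial ℝ) (hp : p.natDegree ≤ n) :
    ∫ x in (0:ℝ)..1, p.eval x * Kf n x = p.eval 1 := by
  have hev : ∀ x : ℝ, p.eval x = ∑ k ∈ range (n+1), p.coeff k * x^k := by
    intro x; exact p.eval_eq_sum_range' (Nat.lt_succ_of_le hp) x
  have hpt : ∀ x : ℝ, p.eval x * Kf n x
      = ∑ k ∈ range (n+1), ∑ j ∈ range (n+1), (p.coeff k * Kco n j) * x^(k+j) := by
    intro x
    rw [hev, Kf, Finset.sum_mul_sum]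
    apply Finset.sum_congr rfl
    intro k _
    apply Finset.sum_congr rfl
    intro j _
    rw [pow_add]; ring
  have hint : ∫ x in (0:ℝ)..1, p.eval x * Kf n x
      = ∑ k ∈ range (n+1), ∑ j ∈ range (n+1), (p.coeff k * Kco n j) / ((k:ℝ)+(j:ℝ)+1) := by
    rw [intervalIntegral.integral_congr (g := fun x => ∑ k ∈ range (n+1), ∑ j ∈ range (n+1),
      (p.coeff k * Kco n j) * x^(k+j)) (fun x _ => hpt x)]
    rw [intervalIntegral.integral_finset_sum]
    · apply Finset.sum_congr rfl
      intro k _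
      rw [intervalIntegral.integral_finset_sum]
      · apply Finset.sum_congr rfl
        intro j _
        rw [intervalIntegral.integral_const_mul, integral_pow]
        push_cast
        ring
      · intro j _
        exact (Continuous.intervalIntegrable (by continuity) _ _)
    · intro k _
      exact (Continuous.intervalIntegrable (by continuity) _ _)
  rw [hint]
  have : ∀ k ∈ range (n+1), ∑ j ∈ range (n+1), (p.coeff k * Kco n j) / ((k:ℝ)+(j:ℝ)+1)
      = p.coeff k := by
    intro k hk
    have hk' : k ≤ n := Nat.lt_succ_iff.mp (mem_range.mp hk)
    calc ∑ j ∈ range (n+1), (p.coeff k * Kco n j) / ((k:ℝ)+(j:ℝ)+1)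
        = p.coeff k * ∑ j ∈ range (n+1), Kco n j / ((k:ℝ)+(j:ℝ)+1) := by
          rw [Finset.mul_sum]
          apply Finset.sum_congr rfl
          intro j _
          ring
      _ = p.coeff k := by rw [key n k hk', mul_one]
  rw [Finset.sum_congr rfl this, hev 1]
  simp

lemma Kf_one (n : ℕ) : Kf n 1 = ((n:ℝ)+1)^2 := by
  rw [Kf]; simpa using Ksum n

lemma core (n : ℕ) (p : Polynomial ℝ) (hp : p.natDegree ≤ n) :
    (p.eval 1)^2 ≤ ((n:ℝ)+1)^2 * ∫ x in (0:ℝ)..1, (p.eval x)^2 := by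
  set I := ∫ x in (0:ℝ)..1, (p.eval x)^2 with hI
  set e := p.eval 1 with he
  have hI0 : 0 ≤ I := intervalIntegral.integral_nonneg (by norm_num) (fun x _ => sq_nonneg _)
  have hrepr : ∫ x in (0:ℝ)..1, p.eval x * Kf n x = e := reprn n p hp
  have hK2 : ∫ x in (0:ℝ)..1, (Kf n x)^2 = ((n:ℝ)+1)^2 := by
    have h := reprn n (Kpoly n) (Kpoly_natDegree_le n)
    simp only [Kpoly_eval] at h
    calc ∫ x in (0:ℝ)..1, (Kf n x)^2 = ∫ x in (0:ℝ)..1, Kf n x * Kf n x := by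
          apply intervalIntegral.integral_congr
          intro x _
          exact sq (Kf n x)
      _ = ((n:ℝ)+1)^2 := by rw [h, Kf_one]
  have hcontp : Continuous (fun x => p.eval x) := p.continuous
  have kc : Continuous (Kf n) := Kf_cont n
  have i1 : IntervalIntegrable (fun x => (Kf n x)^2) volume 0 1 :=
    Continuous.intervalIntegrable (kc.pow 2) _ _
  have i2 : IntervalIntegrable (fun x => p.eval x * Kf n x) volume 0 1 :=
    Continuous.intervalIntegrable (hcontp.mul kc) _ _
  have i3 : IntervalIntegrable (fun x => (p.eval x)^2) volume 0 1 :=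
    Continuous.intervalIntegrable (hcontp.pow 2) _ _
  have expand : ∀ t : ℝ, 0 ≤ ((n:ℝ)+1)^2 - 2*t*e + t^2 * I := by
    intro t
    have h0 : (0:ℝ) ≤ ∫ x in (0:ℝ)..1, (Kf n x - t * p.eval x)^2 :=
      intervalIntegral.integral_nonneg (by norm_num) (fun x _ => sq_nonneg _)
    have hexp : ∫ x in (0:ℝ)..1, (Kf n x - t * p.eval x)^2
        = ((n:ℝ)+1)^2 - 2*t*e + t^2 * I := by
      have : ∀ x : ℝ, (Kf n x - t * p.eval x)^2
          = (Kf n x)^2 - (2*t) * (p.eval x * Kf n x) + t^2 * (p.eval x)^2 := by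
        intro t; ring
      rw [intervalIntegral.integral_congr (fun x _ => this x)]
      rw [intervalIntegral.integral_add ((i1.sub (i2.const_mul (2*t)))) (i3.const_mul (t^2)),
        intervalIntegral.integral_sub i1 (i2.const_mul (2*t)),
        intervalIntegral.integral_const_mul, intervalIntegral.integral_const_mul,
        hK2, hrepr]
      try ring
    rwa [hexp] at h0
  rcases eq_or_lt_of_le hI0 with h0 | hpos
  · have hall : ∀ t : ℝ, 0 ≤ ((n:ℝ)+1)^2 - 2*t*e := by
      intro t
      have := expand t
      rw [← h0] at this
      linarith
    have he0 : e = 0 := by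
      by_contra hne
      have h1 := hall ((((n:ℝ)+1)^2) / e)
      rw [mul_assoc, div_mul_cancel₀ _ hne] at h1
      nlinarith [pow_pos (by positivity : (0:ℝ) < (n:ℝ)+1) 2]
    rw [he0, ← h0]
    norm_num
  · have ht := expand (e / I)
    have hIne : I ≠ 0 := ne_of_gt hpos
    have h2 : 0 ≤ ((n:ℝ)+1)^2 - e^2 / I := by
      have : 2*(e/I)*e - (e/I)^2 * I = e^2 / I := by field_simp; ring
      linarith [ht, this]
    have := mul_le_mul_of_nonneg_right (by linarith : e^2 / I ≤ ((n:ℝ)+1)^2) (le_of_lt hpos)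
    calc e^2 = e^2 / I * I := by field_simp
      _ ≤ ((n:ℝ)+1)^2 * I := this

lemma core0 (n : ℕ) (p : Polynomial ℝ) (hp : p.natDegree ≤ n) :
    (p.eval 0)^2 ≤ ((n:ℝ)+1)^2 * ∫ x in (0:ℝ)..1, (p.eval x)^2 := by
  set r : Polynomial ℝ := p.comp (C 1 - X) with hr
  have hrdeg : r.natDegree ≤ n := by
    refine le_trans natDegree_comp_le ?_
    have h1 : (C (1:ℝ) - X).natDegree ≤ 1 := by
      have : C (1:ℝ) - X = -(X - C 1) := by ring
      rw [this, natDegree_neg, natDegree_X_sub_C]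
    calc p.natDegree * (C (1:ℝ) - X).natDegree ≤ p.natDegree * 1 :=
          Nat.mul_le_mul_left _ h1
      _ ≤ n := by simpa using hp
  have hreval : ∀ x : ℝ, r.eval x = p.eval (1 - x) := by
    intro x; rw [hr, eval_comp]; simp
  have h1 := core n r hrdeg
  rw [hreval 1] at h1
  simp only [sub_self] at h1
  have hint : ∫ x in (0:ℝ)..1, (r.eval x)^2 = ∫ x in (0:ℝ)..1, (p.eval x)^2 := by
    have := intervalIntegral.integral_comp_sub_left (a := (0:ℝ)) (b := 1)
      (fun y => (p.eval y)^2) 1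
    simp only [sub_zero, sub_self] at this
    calc ∫ x in (0:ℝ)..1, (r.eval x)^2 = ∫ x in (0:ℝ)..1, (p.eval (1 - x))^2 := by
          apply intervalIntegral.integral_congr
          intro x _
          simp only [hreval x]
      _ = ∫ x in (0:ℝ)..1, (p.eval x)^2 := this
  rwa [hint] at h1

/-- One-dimensional discrete trace inequality for polynomials: for a real
polynomial `q` of degree at most `n` and an interval `[a,b]`, the squared
endpoint values of `q` are bounded by `(n+1)^2/(b-a)` times the `L²` norm of
`q` on `[a,b]`. -/
theorem polynomial_trace_inequality (n : ℕ) (q : Polynomial ℝ)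
    (hq : q.degree ≤ (n : ℕ∞)) :
    ∀ a b : ℝ, a < b →
      (q.eval b) ^ 2 ≤ (((n : ℝ) + 1) ^ 2 / (b - a)) * ∫ x in a..b, (q.eval x) ^ 2 ∧
      (q.eval a) ^ 2 ≤ (((n : ℝ) + 1) ^ 2 / (b - a)) * ∫ x in a..b, (q.eval x) ^ 2 := by
  intro a b hab
  have hnd : q.natDegree ≤ n := natDegree_le_iff_degree_le.mpr hq
  have hba : b - a ≠ 0 := sub_ne_zero.mpr (ne_of_gt hab)
  set L : Polynomial ℝ := q.comp (C (b-a) * X + C a) with hL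
  have hLdeg : L.natDegree ≤ n := by
    refine le_trans natDegree_comp_le ?_
    calc q.natDegree * (C (b-a) * X + C a).natDegree ≤ q.natDegree * 1 :=
          Nat.mul_le_mul_left _ natDegree_linear_le
      _ ≤ n := by simpa using hnd
  have hLeval : ∀ x : ℝ, L.eval x = q.eval ((b-a)*x + a) := by
    intro x; rw [hL, eval_comp]; simp
  have hL1 : L.eval 1 = q.eval b := by rw [hLeval]; norm_num
  have hL0 : L.eval 0 = q.eval a := by rw [hLeval]; norm_num
  have hint : ∫ x in (0:ℝ)..1, (L.eval x)^2 = (b-a)⁻¹ * ∫ x in a..b, (q.eval x)^2 := by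
    have := intervalIntegral.integral_comp_mul_add (a := (0:ℝ)) (b := 1)
      (fun y => (q.eval y)^2) hba a
    simp only [mul_zero, zero_add, mul_one, smul_eq_mul] at this
    have hb' : b - a + a = b := by ring
    rw [hb'] at this
    calc ∫ x in (0:ℝ)..1, (L.eval x)^2 = ∫ x in (0:ℝ)..1, (q.eval ((b-a)*x + a))^2 := by
          apply intervalIntegral.integral_congr
          intro x _
          simp only [hLeval x]
      _ = (b-a)⁻¹ * ∫ x in a..b, (q.eval x)^2 := by
          rw [this]
  have hb := core n L hLdeg
  have ha := core0 n L hLdeg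
  rw [hL1, hint] at hb
  rw [hL0, hint] at ha
  constructor
  · calc (q.eval b)^2 ≤ ((n:ℝ)+1)^2 * ((b-a)⁻¹ * ∫ x in a..b, (q.eval x)^2) := hb
      _ = (((n:ℝ)+1)^2 / (b-a)) * ∫ x in a..b, (q.eval x)^2 := by
          field_simp
  · calc (q.eval a)^2 ≤ ((n:ℝ)+1)^2 * ((b-a)⁻¹ * ∫ x in a..b, (q.eval x)^2) := ha
      _ = (((n:ℝ)+1)^2 / (b-a)) * ∫ x in a..b, (q.eval x)^2 := by
          field_simp
end

section
/- Let n⁺ and n⁻ be natural numbers, let N = max(n⁺, n⁻), and let a < b < c be real numbers. Let p be a real polynomial of degree at most n⁺ (associated with the element [a,b]) and q a real polynomial of degree at most n⁻ (associated with the element [b,c]). Then the arithmetic average of the derivative values at the shared point b satisfies: ((p'(b) + q'(b))/2)^2 ≤ (N^2/2) · ( (1/(b-a)) ∫_a^b (p'(x))^2 dx + (1/(c-b)) ∫_b^c (q'(x))^2 dx ). -/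
open MeasureTheory Polynomial

noncomputable section
namespace Trace1D

lemma pcont (f : Polynomial ℝ) : Continuous (fun x => f.eval x) := f.continuous_aeval

lemma pint (f : Polynomial ℝ) (a b : ℝ) :
    IntervalIntegrable (fun x => f.eval x) volume a b :=
  ((pcont f).intervalIntegrable _ _)

lemma pint2 (f g : Polynomial ℝ) (a b : ℝ) :
    IntervalIntegrable (fun x => f.eval x * g.eval x) volume a b :=
  (((pcont f).mul (pcont g)).intervalIntegrable _ _)

lemma integral_eval_derivative (f : Polynomial ℝ) (a b : ℝ) :
    ∫ x in a..b, f.derivative.eval x = f.eval b - f.eval a :=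
  intervalIntegral.integral_eq_sub_of_hasDerivAt (fun x _ => f.hasDerivAt x) (pint _ _ _)

/-- integration by parts for polynomials on [-1,1] -/
lemma parts (f g : Polynomial ℝ) :
    ∫ x in (-1:ℝ)..1, f.derivative.eval x * g.eval x
      = (f.eval 1 * g.eval 1 - f.eval (-1) * g.eval (-1))
        - ∫ x in (-1:ℝ)..1, f.eval x * g.derivative.eval x := by
  have h := integral_eval_derivative (f * g) (-1) 1
  have e : (fun x => (f*g).derivative.eval x)
      = fun x => f.derivative.eval x * g.eval x + f.eval x * g.derivative.eval x := by
    funext x; simp [derivative_mul]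
  rw [e, intervalIntegral.integral_add (pint2 _ _ _ _) (pint2 _ _ _ _)] at h
  simp only [eval_mul] at h
  linarith


def Rod (k : ℕ) : Polynomial ℝ := derivative^[k] ((X^2 - 1)^k)

lemma rod_zero : Rod 0 = 1 := by simp [Rod]

lemma rod_factor (k i : ℕ) (hi : i ≤ k) :
    ∃ h : Polynomial ℝ, derivative^[i] ((X^2 - 1)^k) = (X^2-1)^(k-i) * h := by
  induction i with
  | zero => exact ⟨1, by simp⟩
  | succ i ih =>
    obtain ⟨h, hh⟩ := ih (Nat.le_of_succ_le hi)
    have hki : k - i = (k - (i+1)) + 1 := by omega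
    refine ⟨C ((k:ℝ) - i) * (C 2 * X) * h + (X^2-1) * derivative h, ?_⟩
    rw [Function.iterate_succ_apply', hh, hki]
    rw [derivative_mul, derivative_pow]
    simp only [derivative_sub, derivative_one, derivative_X_pow]
    have hc : (((k - (i+1)) + 1 : ℕ) : ℝ) = (k:ℝ) - i := by
      push_cast [Nat.cast_sub (by omega : i + 1 ≤ k)]; ring
    generalize (k - (i+1)) = m at *
    rw [hc]
    push_cast
    ring

lemma eval_iter_deriv_eq_zero (k i : ℕ) (hi : i < k) (x : ℝ) (hx : x^2 = 1) :
    (derivative^[i] ((X^2 - 1)^k : Polynomial ℝ)).eval x = 0 := by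
  obtain ⟨h, hh⟩ := rod_factor k i hi.le
  rw [hh]
  have : k - i ≠ 0 := by omega
  simp [eval_pow, hx, zero_pow this]

lemma eval_one_iter (k : ℕ) : ∀ g : Polynomial ℝ,
    (derivative^[k] ((X - 1)^k * g)).eval 1 = (k.factorial : ℝ) * g.eval 1 := by
  induction k with
  | zero => intro g; simp
  | succ k ih =>
    intro g
    have e : derivative ((X - 1)^(k+1) * g)
        = (X-1)^k * (C ((k:ℝ)+1) * g + (X - 1) * derivative g) := by
      rw [derivative_mul, derivative_pow]
      simp only [derivative_sub, derivative_one, derivative_X]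
      push_cast
      ring
    rw [Function.iterate_succ_apply, e, ih]
    simp [Nat.factorial_succ]
    push_cast
    ring

lemma rod_eval_one (k : ℕ) : (Rod k).eval 1 = 2^k * (k.factorial : ℝ) := by
  have e : ((X^2 - 1 : Polynomial ℝ))^k = (X-1)^k * (X+1)^k := by
    rw [← mul_pow]; congr 1; ring
  rw [Rod, e, eval_one_iter]
  norm_num
  ring

lemma monic_sq : (((X:Polynomial ℝ)^2 - 1) ^ k).Monic := by
  have : ((X:Polynomial ℝ)^2 - 1) = X^2 - C 1 := by norm_num
  rw [this]
  exact (monic_X_pow_sub_C (1:ℝ) (by norm_num : (2:ℕ) ≠ 0)).pow k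

lemma natDegree_sq (k : ℕ) : (((X:Polynomial ℝ)^2 - 1) ^ k).natDegree = 2 * k := by
  have : ((X:Polynomial ℝ)^2 - 1) = X^2 - C 1 := by norm_num
  rw [this, natDegree_pow, natDegree_X_pow_sub_C]
  ring

lemma rod_coeff_self (k : ℕ) : (Rod k).coeff k = ((2*k).descFactorial k : ℝ) := by
  rw [Rod, coeff_iterate_derivative]
  have h2 : k + k = ((X^2 - 1 : Polynomial ℝ)^k).natDegree := by rw [natDegree_sq]; ring
  rw [h2, (monic_sq).coeff_natDegree]
  rw [← h2]
  simp [nsmul_eq_mul]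
  norm_cast
  congr 1
  omega

lemma rod_coeff_ne (k : ℕ) : (Rod k).coeff k ≠ 0 := by
  rw [rod_coeff_self]
  simp only [ne_eq, Nat.cast_eq_zero, Nat.descFactorial_eq_zero_iff_lt]
  omega

lemma rod_natDegree_le (k : ℕ) : (Rod k).natDegree ≤ k := by
  have := natDegree_iterate_derivative ((X^2 - 1 : Polynomial ℝ)^k) k
  rwa [natDegree_sq, (by omega : 2*k - k = k)] at this

lemma rod_iter_deriv (k : ℕ) :
    derivative^[k] (Rod k) = C (((2*k).factorial : ℝ)) := by
  rw [Rod, ← Function.iterate_add_apply]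
  have hd : (derivative^[k+k] ((X^2 - 1 : Polynomial ℝ)^k)).natDegree ≤ 0 := by
    have := natDegree_iterate_derivative ((X^2 - 1 : Polynomial ℝ)^k) (k+k)
    rwa [natDegree_sq, (by omega : 2*k - (k+k) = 0)] at this
  rw [Polynomial.eq_C_of_natDegree_le_zero hd, coeff_iterate_derivative]
  have h2 : 0 + (k + k) = ((X^2 - 1 : Polynomial ℝ)^k).natDegree := by rw [natDegree_sq]; ring
  rw [h2, (monic_sq).coeff_natDegree]
  simp [nsmul_eq_mul]
  norm_cast
  have : ((X:Polynomial ℝ)^2 - 1).natDegree = 2 := by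
    have h := natDegree_sq 1
    simpa using h
  rw [this, (by omega : k * 2 = k + k), Nat.descFactorial_self, (by omega : 2 * k = k + k)]


lemma iterated_parts (k : ℕ) (s : Polynomial ℝ) : ∀ i ≤ k,
    ∫ x in (-1:ℝ)..1, (Rod k).eval x * s.eval x
      = (-1)^i * ∫ x in (-1:ℝ)..1,
          (derivative^[k-i] ((X^2-1)^k : Polynomial ℝ)).eval x * (derivative^[i] s).eval x := by
  intro i hi
  induction i with
  | zero => simp [Rod]
  | succ i ih =>
    rw [ih (by omega)]
    have hk : k - i = (k - (i+1)) + 1 := by omega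
    have key := parts (derivative^[k-(i+1)] ((X^2-1)^k)) (derivative^[i] s)
    have e1 : derivative (derivative^[k-(i+1)] ((X^2-1)^k : Polynomial ℝ))
        = derivative^[k-i] ((X^2-1)^k : Polynomial ℝ) := by
      rw [hk, Function.iterate_succ_apply']
    have e2 : derivative (derivative^[i] s) = derivative^[i+1] s :=
      (Function.iterate_succ_apply' _ _ _).symm
    rw [e1, e2] at key
    rw [key, eval_iter_deriv_eq_zero k _ (by omega) 1 (by norm_num),
        eval_iter_deriv_eq_zero k _ (by omega) (-1) (by norm_num)]
    ring

lemma rod_orthogonal (k : ℕ) (s : Polynomial ℝ) (hs : s.natDegree < k) :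
    ∫ x in (-1:ℝ)..1, (Rod k).eval x * s.eval x = 0 := by
  rw [iterated_parts k s k le_rfl, iterate_derivative_eq_zero hs]
  simp

lemma rod_self (k : ℕ) :
    ∫ x in (-1:ℝ)..1, (Rod k).eval x * (Rod k).eval x
      = (-1)^k * ((2*k).factorial : ℝ) * ∫ x in (-1:ℝ)..1, ((x^2-1))^k := by
  rw [iterated_parts k (Rod k) k le_rfl, rod_iter_deriv]
  simp only [Nat.sub_self, Function.iterate_zero_apply, eval_C]
  have e : (fun x => eval x ((X^2 - 1: Polynomial ℝ)^k) * ((2*k).factorial : ℝ))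
      = fun x : ℝ => ((x^2-1))^k * ((2*k).factorial : ℝ) := by
    funext x; simp
  rw [e, intervalIntegral.integral_mul_const]
  ring


def Wal (k : ℕ) : ℝ := ∫ x in (-1:ℝ)..1, (1 - x^2)^k

lemma wal_zero : Wal 0 = 2 := by norm_num [Wal]

lemma wal_rec (m : ℕ) : (2*(m:ℝ)+3) * Wal (m+1) = (2*m+2) * Wal m := by
  have hpoly : derivative ((X : Polynomial ℝ) * (1 - X^2)^(m+1))
      = C (2*(m:ℝ)+3) * (1-X^2)^(m+1) - C (2*(m:ℝ)+2) * (1-X^2)^m := by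
    rw [derivative_mul, derivative_pow]
    simp only [derivative_X, derivative_sub, derivative_one, derivative_X_pow]
    have : ((1:Polynomial ℝ) - X^2)^(m+1) = (1-X^2)^m * (1-X^2) := by ring
    rw [this]
    simp only [map_add, map_mul, map_one, map_ofNat, map_natCast]
    push_cast
    ring
  have h := integral_eval_derivative ((X : Polynomial ℝ) * (1 - X^2)^(m+1)) (-1) 1
  rw [hpoly] at h
  have e : (fun x => (C (2*(m:ℝ)+3) * (1-X^2)^(m+1) - C (2*(m:ℝ)+2) * (1-X^2)^m).eval x)
      = fun x : ℝ => (2*(m:ℝ)+3) * (1-x^2)^(m+1) - (2*(m:ℝ)+2) * (1-x^2)^m := by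
    funext x; simp
  rw [e] at h
  have e1 : IntervalIntegrable (fun x : ℝ => (2*(m:ℝ)+3) * (1-x^2)^(m+1)) volume (-1) 1 := by
    apply Continuous.intervalIntegrable; continuity
  have e2 : IntervalIntegrable (fun x : ℝ => (2*(m:ℝ)+2) * (1-x^2)^m) volume (-1) 1 := by
    apply Continuous.intervalIntegrable; continuity
  rw [intervalIntegral.integral_sub e1 e2, intervalIntegral.integral_const_mul,
      intervalIntegral.integral_const_mul] at h
  simp only [eval_mul, eval_X, eval_pow, eval_sub, eval_one] at h
  have h1 : (1:ℝ) * (1 - 1^2)^(m+1) = 0 := by norm_num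
  rw [Wal, Wal]
  norm_num at h
  linarith

lemma wal_closed (k : ℕ) :
    Wal k = 2^(2*k+1) * ((k.factorial : ℝ))^2 / ((2*k+1).factorial : ℝ) := by
  induction k with
  | zero => simp [wal_zero]
  | succ m ih =>
    have h := wal_rec m
    have h3 : (2*(m:ℝ)+3) ≠ 0 := by positivity
    have hw : Wal (m+1) = (2*(m:ℝ)+2) * Wal m / (2*(m:ℝ)+3) := by
      field_simp
      linarith
    have hf1 : ((2*(m+1)+1).factorial : ℝ)
        = (2*(m:ℝ)+3) * ((2*(m:ℝ)+2) * ((2*m+1).factorial : ℝ)) := by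
      have e1 : 2*(m+1)+1 = (2*m+1) + 1 + 1 := by omega
      rw [e1, Nat.factorial_succ, Nat.factorial_succ]
      push_cast
      ring
    have hf2 : (((m+1).factorial : ℝ)) = ((m:ℝ)+1) * (m.factorial : ℝ) := by
      rw [Nat.factorial_succ]; push_cast; ring
    have hp : (2:ℝ)^(2*(m+1)+1) = 2^(2*m+1) * 4 := by
      rw [(by omega : 2*(m+1)+1 = (2*m+1)+2)]; ring
    have hz1 : ((2*m+1).factorial : ℝ) ≠ 0 := Nat.cast_ne_zero.mpr (Nat.factorial_ne_zero _)
    rw [hw, ih, hf1, hf2, hp]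
    field_simp
    ring

-- normalized Legendre
def Leg (k : ℕ) : Polynomial ℝ := C (1/(2^k * (k.factorial : ℝ))) * Rod k

lemma leg_zero : Leg 0 = 1 := by
  norm_num [Leg, rod_zero]

lemma leg_natDegree_le (k : ℕ) : (Leg k).natDegree ≤ k :=
  (natDegree_C_mul_le _ _).trans (rod_natDegree_le k)

lemma fact_pos (k : ℕ) : (0:ℝ) < (k.factorial : ℝ) := by
  exact_mod_cast Nat.factorial_pos k

lemma leg_coeff_ne (k : ℕ) : (Leg k).coeff k ≠ 0 := by
  rw [Leg, coeff_C_mul]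
  have h1 : (1/(2^k * (k.factorial : ℝ))) ≠ 0 := by
    have := fact_pos k; positivity
  exact mul_ne_zero h1 (rod_coeff_ne k)

lemma leg_eval_one (k : ℕ) : (Leg k).eval 1 = 1 := by
  rw [Leg, eval_mul, eval_C, rod_eval_one]
  have := fact_pos k
  field_simp

-- integral helpers
lemma int_mul_Cmul (f g : Polynomial ℝ) (c : ℝ) :
    ∫ x in (-1:ℝ)..1, f.eval x * (C c * g).eval x
      = c * ∫ x in (-1:ℝ)..1, f.eval x * g.eval x := by
  rw [← intervalIntegral.integral_const_mul]
  congr 1; funext x; simp; ring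

lemma int_Cmul_mul (f g : Polynomial ℝ) (c : ℝ) :
    ∫ x in (-1:ℝ)..1, (C c * f).eval x * g.eval x
      = c * ∫ x in (-1:ℝ)..1, f.eval x * g.eval x := by
  rw [← intervalIntegral.integral_const_mul]
  congr 1; funext x; simp; ring

lemma int_comm (f g : Polynomial ℝ) :
    ∫ x in (-1:ℝ)..1, f.eval x * g.eval x = ∫ x in (-1:ℝ)..1, g.eval x * f.eval x := by
  congr 1; funext x; ring

lemma leg_orthogonal (k : ℕ) (s : Polynomial ℝ) (hs : s.natDegree < k) :
    ∫ x in (-1:ℝ)..1, (Leg k).eval x * s.eval x = 0 := by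
  rw [Leg, int_Cmul_mul, rod_orthogonal k s hs, mul_zero]

lemma leg_mul_leg (k j : ℕ) (h : k ≠ j) :
    ∫ x in (-1:ℝ)..1, (Leg k).eval x * (Leg j).eval x = 0 := by
  rcases Nat.lt_or_ge j k with hjk | hjk
  · exact leg_orthogonal k _ (lt_of_le_of_lt (leg_natDegree_le j) hjk)
  · rw [int_comm]
    exact leg_orthogonal j _ (lt_of_le_of_lt (leg_natDegree_le k) (by omega))

lemma leg_norm (k : ℕ) :
    ∫ x in (-1:ℝ)..1, (Leg k).eval x * (Leg k).eval x = 2/(2*(k:ℝ)+1) := by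
  rw [Leg, int_Cmul_mul, int_mul_Cmul, rod_self]
  have e : ∫ x in (-1:ℝ)..1, ((x^2-1))^k = (-1)^k * Wal k := by
    rw [Wal, ← intervalIntegral.integral_const_mul]
    congr 1; funext x
    rw [show (x^2 - 1) = -(1 - x^2) by ring, neg_pow]
  have hsign : ((-1:ℝ))^k * ((-1:ℝ))^k = 1 := by
    rw [← mul_pow]; norm_num
  have hs2 : (-1:ℝ)^k * ((2*k).factorial : ℝ) * ((-1)^k * Wal k)
      = ((2*k).factorial : ℝ) * Wal k := by
    linear_combination hsign * (((2*k).factorial : ℝ) * Wal k) - Wal k * ((2*k).factorial : ℝ) * hsign + (((2*k).factorial : ℝ)) * Wal k * hsign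
  rw [e, hs2, wal_closed]
  have hfact : ((2*k+1).factorial : ℝ) = (2*(k:ℝ)+1) * ((2*k).factorial : ℝ) := by
    rw [Nat.factorial_succ]; push_cast; ring
  have h1 := fact_pos k
  have h2 := fact_pos (2*k)
  have h3 : (0:ℝ) < 2*(k:ℝ)+1 := by positivity
  have hpow : (2:ℝ)^(2*k+1) = 2 * ((2:ℝ)^k * 2^k) := by
    rw [pow_succ, ← pow_add]; ring_nf
  rw [hfact, hpow]
  field_simp


def Ker (d : ℕ) : Polynomial ℝ :=
  ∑ k ∈ Finset.range (d+1), C ((2*(k:ℝ)+1)/2) * Leg k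

lemma ker_natDegree_le (d : ℕ) : (Ker d).natDegree ≤ d := by
  apply natDegree_sum_le_of_forall_le
  intro i hi
  exact (natDegree_C_mul_le _ _).trans
    ((leg_natDegree_le i).trans (by simpa [Nat.lt_succ_iff] using hi))

lemma sum_odd (n : ℕ) : ∑ k ∈ Finset.range n, (2*(k:ℝ)+1) = (n:ℝ)^2 := by
  induction n with
  | zero => simp
  | succ m ih => rw [Finset.sum_range_succ, ih]; push_cast; ring

lemma ker_eval_one (d : ℕ) : (Ker d).eval 1 = ((d:ℝ)+1)^2/2 := by
  rw [Ker, eval_finset_sum]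
  simp only [eval_mul, eval_C, leg_eval_one, mul_one]
  rw [← Finset.sum_div, sum_odd]
  push_cast; ring

lemma int_mul_add (f g h : Polynomial ℝ) :
    ∫ x in (-1:ℝ)..1, f.eval x * (g + h).eval x
      = (∫ x in (-1:ℝ)..1, f.eval x * g.eval x)
        + ∫ x in (-1:ℝ)..1, f.eval x * h.eval x := by
  rw [← intervalIntegral.integral_add (pint2 f g _ _) (pint2 f h _ _)]
  congr 1; funext x; simp; ring

lemma ker_mul_leg (d j : ℕ) (hj : j ≤ d) :
    ∫ x in (-1:ℝ)..1, (Ker d).eval x * (Leg j).eval x = 1 := by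
  have e : (fun x => (Ker d).eval x * (Leg j).eval x)
      = fun x => ∑ k ∈ Finset.range (d+1), ((2*(k:ℝ)+1)/2) * ((Leg k).eval x * (Leg j).eval x) := by
    funext x
    rw [Ker, eval_finset_sum, Finset.sum_mul]
    congr 1; funext k; simp; ring
  rw [e, intervalIntegral.integral_finset_sum
      (fun k _ => ((pint2 (Leg k) (Leg j) (-1) 1).const_mul ((2*(k:ℝ)+1)/2)))]
  have : ∀ k ∈ Finset.range (d+1),
        (∫ x in (-1:ℝ)..1, ((2*(k:ℝ)+1)/2) * ((Leg k).eval x * (Leg j).eval x))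
        = if k = j then 1 else 0 := by
      intro k _
      rw [intervalIntegral.integral_const_mul]
      by_cases hkj : k = j
      · subst hkj
        rw [leg_norm, if_pos rfl]
        have : (0:ℝ) < 2*(k:ℝ)+1 := by positivity
        field_simp
      · rw [leg_mul_leg k j hkj, if_neg hkj, mul_zero]
  rw [Finset.sum_congr rfl this]
  simp [Nat.lt_succ_iff, hj]


/-- reproducing property of the kernel -/
lemma ker_reproduce (d : ℕ) (s : Polynomial ℝ) (hs : s.natDegree ≤ d) :
    ∫ x in (-1:ℝ)..1, (Ker d).eval x * s.eval x = s.eval 1 := by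
  suffices H : ∀ m : ℕ, m ≤ d → ∀ s : Polynomial ℝ, s.natDegree ≤ m →
      ∫ x in (-1:ℝ)..1, (Ker d).eval x * s.eval x = s.eval 1 from H d le_rfl s hs
  intro m
  induction m with
  | zero =>
    intro _ s hs0
    rw [Polynomial.eq_C_of_natDegree_le_zero hs0]
    have h0 : (C (s.coeff 0) : Polynomial ℝ) = C (s.coeff 0) * Leg 0 := by
      rw [leg_zero, mul_one]
    rw [h0, int_mul_Cmul, ker_mul_leg d 0 (Nat.zero_le d)]
    simp [leg_eval_one]
  | succ m ih =>
    intro hmd s hsm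
    set cc : ℝ := s.coeff (m+1) / (Leg (m+1)).coeff (m+1) with hcc
    set t : Polynomial ℝ := s - C cc * Leg (m+1) with ht
    have hts : s = t + C cc * Leg (m+1) := by rw [ht]; ring
    have htd : t.natDegree ≤ m := by
      rw [natDegree_le_iff_coeff_eq_zero]
      intro i hi
      rw [ht]
      simp only [coeff_sub, coeff_C_mul]
      rcases Nat.lt_or_ge (m+1) i with h1 | h1
      · rw [coeff_eq_zero_of_natDegree_lt (lt_of_le_of_lt hsm h1),
            coeff_eq_zero_of_natDegree_lt (lt_of_le_of_lt (leg_natDegree_le (m+1)) h1)]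
        ring
      · have : i = m+1 := by omega
        subst this
        rw [hcc, div_mul_cancel₀ _ (leg_coeff_ne (m+1)), sub_self]
    rw [hts, int_mul_add, int_mul_Cmul, ih (by omega) t htd, ker_mul_leg d (m+1) hmd]
    simp [leg_eval_one]


/-- the sharp trace inequality on [-1,1], at the right endpoint -/
theorem core (d : ℕ) (s : Polynomial ℝ) (hs : s.natDegree ≤ d) :
    (s.eval 1)^2 ≤ (((d:ℝ)+1)^2/2) * ∫ x in (-1:ℝ)..1, (s.eval x)^2 := by
  set K := Ker d
  have hK1 : K.eval 1 = ((d:ℝ)+1)^2/2 := ker_eval_one d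
  have hKpos : (0:ℝ) < K.eval 1 := by rw [hK1]; positivity
  set c : ℝ := s.eval 1 / K.eval 1 with hc
  have hKK : ∫ x in (-1:ℝ)..1, K.eval x * K.eval x = K.eval 1 :=
    ker_reproduce d K (ker_natDegree_le d)
  have hKs : ∫ x in (-1:ℝ)..1, K.eval x * s.eval x = s.eval 1 :=
    ker_reproduce d s hs
  have key : 0 ≤ ∫ x in (-1:ℝ)..1, (s.eval x - c * K.eval x)^2 := by
    apply intervalIntegral.integral_nonneg (by norm_num)
    intro x _; positivity
  have expand : ∫ x in (-1:ℝ)..1, (s.eval x - c * K.eval x)^2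
      = (∫ x in (-1:ℝ)..1, (s.eval x)^2) - 2*c*(s.eval 1) + c^2 * K.eval 1 := by
    have e : (fun x => (s.eval x - c * K.eval x)^2)
        = fun x => s.eval x * s.eval x
            - (2*c) * (K.eval x * s.eval x) + c^2 * (K.eval x * K.eval x) := by
      funext x; ring
    rw [e]
    rw [intervalIntegral.integral_add (IntervalIntegrable.sub (pint2 s s _ _)
          ((pint2 K s _ _).const_mul _)) ((pint2 K K _ _).const_mul _),
        intervalIntegral.integral_sub (pint2 s s _ _) ((pint2 K s _ _).const_mul _),
        intervalIntegral.integral_const_mul, intervalIntegral.integral_const_mul,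
        hKK, hKs]
    have e2 : (fun x => s.eval x * s.eval x) = fun x => (s.eval x)^2 := by
      funext x; ring
    rw [e2]
  rw [expand] at key
  have hc2 : 2*c*(s.eval 1) - c^2 * K.eval 1 = (s.eval 1)^2 / K.eval 1 := by
    rw [hc]; field_simp; ring
  have key2 : (s.eval 1)^2 / K.eval 1 ≤ ∫ x in (-1:ℝ)..1, (s.eval x)^2 := by
    linarith
  calc (s.eval 1)^2 = ((s.eval 1)^2 / K.eval 1) * K.eval 1 := by field_simp
  _ ≤ (∫ x in (-1:ℝ)..1, (s.eval x)^2) * K.eval 1 := by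
      apply mul_le_mul_of_nonneg_right key2 hKpos.le
  _ = (((d:ℝ)+1)^2/2) * ∫ x in (-1:ℝ)..1, (s.eval x)^2 := by rw [hK1]; ring


lemma lin_natDegree (c0 m : ℝ) : (C c0 + C m * X : Polynomial ℝ).natDegree ≤ 1 :=
  (natDegree_add_le _ _).trans (by
    simp only [natDegree_C, max_le_iff]
    exact ⟨Nat.zero_le 1, (natDegree_C_mul_le _ _).trans natDegree_X_le⟩)

lemma comp_natDegree_le (r : Polynomial ℝ) (d : ℕ) (hr : r.natDegree ≤ d) (c0 m : ℝ) :
    (r.comp (C c0 + C m * X)).natDegree ≤ d :=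
  (natDegree_comp_le).trans (le_trans (Nat.mul_le_mul hr (lin_natDegree c0 m)) (by omega))

/-- generic scaled trace inequality for evaluation point `e` reached as `m·1 + c0` -/
lemma trace_gen (d : ℕ) (r : Polynomial ℝ) (hr : r.natDegree ≤ d)
    (α β c0 m e : ℝ) (hm : m ≠ 0)
    (h1 : m * (-1) + c0 = α) (h2 : m * 1 + c0 = β) (he : m + c0 = e) :
    (r.eval e)^2 ≤ (((d:ℝ)+1)^2/2) * (m⁻¹ * ∫ x in α..β, (r.eval x)^2) := by
  set s : Polynomial ℝ := r.comp (C c0 + C m * X) with hs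
  have hsd : s.natDegree ≤ d := comp_natDegree_le r d hr _ _
  have hse : ∀ x : ℝ, s.eval x = r.eval (m * x + c0) := by
    intro x; rw [hs, eval_comp]; simp [add_comm]
  have key := core d s hsd
  have hint : ∫ x in (-1:ℝ)..1, (s.eval x)^2 = m⁻¹ * ∫ x in α..β, (r.eval x)^2 := by
    have hc := intervalIntegral.integral_comp_mul_add (a := (-1:ℝ)) (b := 1)
      (fun y => (r.eval y)^2) hm c0
    rw [h1, h2] at hc
    rw [show (fun x => (s.eval x)^2) = fun x => (fun y => (r.eval y)^2) (m * x + c0) by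
      funext x; rw [hse], hc, smul_eq_mul]
  rw [hint] at key
  rw [hse 1, mul_one, he] at key
  exact key

theorem trace_right (d : ℕ) (r : Polynomial ℝ) (hr : r.natDegree ≤ d)
    (α β : ℝ) (hab : α < β) :
    (r.eval β)^2 ≤ (((d:ℝ)+1)^2/(β-α)) * ∫ x in α..β, (r.eval x)^2 := by
  have hba : (0:ℝ) < β - α := by linarith
  have hm : ((β-α)/2 : ℝ) ≠ 0 := by positivity
  have h := trace_gen d r hr α β ((α+β)/2) ((β-α)/2) β hm (by ring) (by ring) (by ring)
  have e : (((d:ℝ)+1)^2/2) * (((β-α)/2)⁻¹ * ∫ x in α..β, (r.eval x)^2)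
      = (((d:ℝ)+1)^2/(β-α)) * ∫ x in α..β, (r.eval x)^2 := by
    rw [show ((β-α)/2 : ℝ)⁻¹ = 2/(β-α) by rw [inv_div]]
    field_simp
  linarith [h, e.ge, e.le]

theorem trace_left (d : ℕ) (r : Polynomial ℝ) (hr : r.natDegree ≤ d)
    (α β : ℝ) (hab : α < β) :
    (r.eval α)^2 ≤ (((d:ℝ)+1)^2/(β-α)) * ∫ x in α..β, (r.eval x)^2 := by
  have hba : (0:ℝ) < β - α := by linarith
  have hm : (-(β-α)/2 : ℝ) ≠ 0 := by
    have : (-(β-α)/2 : ℝ) < 0 := by linarith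
    exact this.ne
  have h := trace_gen d r hr β α ((α+β)/2) (-(β-α)/2) α hm (by ring) (by ring) (by ring)
  rw [intervalIntegral.integral_symm α β] at h
  have e : (((d:ℝ)+1)^2/2) * ((-(β-α)/2)⁻¹ * -∫ x in α..β, (r.eval x)^2)
      = (((d:ℝ)+1)^2/(β-α)) * ∫ x in α..β, (r.eval x)^2 := by
    rw [show (-(β-α)/2 : ℝ)⁻¹ = -(2/(β-α)) by
      rw [show (-(β-α)/2 : ℝ) = -((β-α)/2) by ring, inv_neg, inv_div]]
    field_simp
  linarith [h, e.ge, e.le]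


end Trace1D
end

open Trace1D in
/-- One-dimensional trace inequality for mixed polynomial order: for polynomials
`p`, `q` of degrees at most `n⁺`, `n⁻` on adjacent elements `[a,b]`, `[b,c]`,
the squared arithmetic average of the derivatives at the shared point `b` is
bounded by `N²/2` (with `N = max n⁺ n⁻`) times the sum of the scaled elementwise
`L²` norms of the derivatives. -/
theorem mixed_order_trace_inequality (np nm N : ℕ) (hN : N = max np nm)
    (a b c : ℝ) (hab : a < b) (hbc : b < c)
    (p q : Polynomial ℝ) (hp : p.degree ≤ (np : ℕ∞)) (hq : q.degree ≤ (nm : ℕ∞)) :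
    ((p.derivative.eval b + q.derivative.eval b) / 2) ^ 2 ≤
      ((N : ℝ) ^ 2 / 2) *
        ((1 / (b - a)) * (∫ x in a..b, (p.derivative.eval x) ^ 2)
          + (1 / (c - b)) * ∫ x in b..c, (q.derivative.eval x) ^ 2) := by
  have hpn : p.natDegree ≤ np := natDegree_le_iff_degree_le.mpr (by exact_mod_cast hp)
  have hqn : q.natDegree ≤ nm := natDegree_le_iff_degree_le.mpr (by exact_mod_cast hq)
  rcases Nat.eq_zero_or_pos N with h0 | hNpos
  · have hnp : np = 0 := by omega
    have hnm : nm = 0 := by omega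
    have hp0 : p.derivative = 0 := by
      rw [Polynomial.eq_C_of_natDegree_le_zero (by omega : p.natDegree ≤ 0)]
      simp
    have hq0 : q.derivative = 0 := by
      rw [Polynomial.eq_C_of_natDegree_le_zero (by omega : q.natDegree ≤ 0)]
      simp
    simp [hp0, hq0, h0]
  · set d : ℕ := N - 1 with hd
    have hdN : ((d:ℝ)+1) = (N:ℝ) := by
      rw [hd]; push_cast [Nat.cast_sub hNpos]; ring
    have hpd : p.derivative.natDegree ≤ d :=
      (natDegree_derivative_le p).trans (by omega)
    have hqd : q.derivative.natDegree ≤ d :=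
      (natDegree_derivative_le q).trans (by omega)
    have h1 := trace_right d p.derivative hpd a b hab
    have h2 := trace_left d q.derivative hqd b c hbc
    rw [hdN] at h1 h2
    set x := p.derivative.eval b
    set y := q.derivative.eval b
    set I1 := ∫ x in a..b, (p.derivative.eval x) ^ 2
    set I2 := ∫ x in b..c, (q.derivative.eval x) ^ 2
    have havg : ((x + y)/2)^2 ≤ (x^2 + y^2)/2 := by nlinarith [sq_nonneg (x - y)]
    have hfin : (x^2 + y^2)/2 ≤ ((N : ℝ) ^ 2 / 2) * ((1 / (b - a)) * I1 + (1 / (c - b)) * I2) := by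
      have e1 : (N:ℝ)^2/(b-a) * I1 = (N:ℝ)^2 * ((1/(b-a)) * I1) := by ring
      have e2 : (N:ℝ)^2/(c-b) * I2 = (N:ℝ)^2 * ((1/(c-b)) * I2) := by ring
      rw [e1] at h1; rw [e2] at h2
      nlinarith [h1, h2]
    exact le_trans havg hfin
end

section
/- Let (Ω, μ) be a probability measure space and let u : Ω → ℝ be a bounded measurable function with mean m = ∫ u dμ satisfying |m| ≤ 1. Let M∞ be the essential supremum of |u - m| and assume M∞ > 0. Define the scaling factor θ = min(1, (1 - |m|)/M∞) and the limited function ũ = θ(u - m) + m. Then: (i) |ũ(x)| ≤ 1 for μ-almost every x (the limited function satisfies the discrete maximum principle with bound 1), and (ii) ∫ ũ dμ = m (the limiter preserves the mean, hence the mass). -/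
open MeasureTheory

/-- The Zhang–Shu scaling limiter: on a probability space, rescaling a bounded
measurable function `u` toward its mean `m` (with `|m| ≤ 1`) by the factor
`θ = min 1 ((1 - |m|)/M∞)`, where `M∞ = essSup |u - m|`, produces a function
`ũ = θ(u - m) + m` that is bounded by `1` almost everywhere and has the same
mean. -/
theorem zhang_shu_limiter {Ω : Type*} [MeasurableSpace Ω] (μ : Measure Ω)
    [IsProbabilityMeasure μ] (u : Ω → ℝ) (hmeas : Measurable u) (C : ℝ)
    (hbdd : ∀ x, |u x| ≤ C) (m : ℝ) (hm : m = ∫ x, u x ∂μ) (hm1 : |m| ≤ 1)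
    (Minf : ℝ) (hM : Minf = essSup (fun x => |u x - m|) μ) (hMpos : 0 < Minf)
    (θ : ℝ) (hθ : θ = min 1 ((1 - |m|) / Minf))
    (utilde : Ω → ℝ) (hu : utilde = fun x => θ * (u x - m) + m) :
    (∀ᵐ x ∂μ, |utilde x| ≤ 1) ∧ (∫ x, utilde x ∂μ) = m := by
  have hθ0 : 0 ≤ θ := by
    rw [hθ]
    have : 0 ≤ (1 - |m|) / Minf := div_nonneg (by linarith) hMpos.le
    positivity
  have hθM : θ * Minf ≤ 1 - |m| := by
    have hθle : θ ≤ (1 - |m|) / Minf := by rw [hθ]; exact min_le_right _ _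
    calc θ * Minf ≤ (1 - |m|) / Minf * Minf :=
          mul_le_mul_of_nonneg_right hθle hMpos.le
      _ = 1 - |m| := div_mul_cancel₀ _ hMpos.ne'
  have hbound : Filter.IsBoundedUnder (· ≤ ·) (ae μ) (fun x => |u x - m|) :=
    ⟨C + |m|, ae_of_all _ fun x => (abs_sub (u x) m).trans (add_le_add (hbdd x) le_rfl)⟩
  have hae : ∀ᵐ x ∂μ, |u x - m| ≤ Minf := by
    rw [hM]; exact ae_le_essSup hbound
  constructor
  · filter_upwards [hae] with x hx
    rw [hu]
    calc |θ * (u x - m) + m| ≤ |θ * (u x - m)| + |m| := abs_add_le _ _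
      _ = θ * |u x - m| + |m| := by rw [abs_mul, abs_of_nonneg hθ0]
      _ ≤ θ * Minf + |m| := by nlinarith
      _ ≤ 1 := by linarith
  · have hint : Integrable u μ :=
      Integrable.mono' (integrable_const C) hmeas.aestronglyMeasurable
        (ae_of_all _ hbdd)
    rw [hu]
    have h1 : Integrable (fun x => θ * (u x - m)) μ :=
      ((hint.sub (integrable_const m)).const_mul θ)
    rw [integral_add h1 (integrable_const m)]
    rw [integral_const_mul, integral_sub hint (integrable_const m)]
    simp [← hm]
end

section
/- Let n ≥ 1 be a natural number, let a < b < c be real numbers, and let p, q be real polynomials of degree at most n on the elements [a,b] and [b,c] respectively. Let m⁺, m⁻ > 0 be the (constant) one-sided mobility values, ⟨⟨m⟩⟩ = 2m⁺m⁻/(m⁺+m⁻) the harmonic average, h = 2(b-a)(c-b)/((b-a)+(c-b)) the face width, J = p(b) - q(b) the jump, and A = (p'(b)+q'(b))/2 the average normal derivative. Define the two-element SWIP form b := m⁺ ∫_a^b (p'(x))² dx + m⁻ ∫_b^c (q'(x))² dx + (η ⟨⟨m⟩⟩ / h) J² - 2 ⟨⟨m⟩⟩ A J. Then for every penalty parameter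 η ≥ 8n², coercivity holds: b ≥ (1/2) ( m⁺ ∫_a^b (p'(x))² dx + m⁻ ∫_b^c (q'(x))² dx + (η ⟨⟨m⟩⟩ / h) J² ). -/
open MeasureTheory Polynomial

namespace SWIPAux

open Finset

noncomputable def intg (P : Polynomial ℝ) : ℝ := ∫ x in (0:ℝ)..1, P.eval x

lemma intg_add (P Q : Polynomial ℝ) : intg (P + Q) = intg P + intg Q := by
  unfold intg
  simp only [eval_add]
  exact intervalIntegral.integral_add ((P.continuous).intervalIntegrable _ _)
    ((Q.continuous).intervalIntegrable _ _)

lemma intg_zero : intg 0 = 0 := by simp [intg]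

lemma intg_Cmul (c : ℝ) (P : Polynomial ℝ) : intg (C c * P) = c * intg P := by
  unfold intg
  simp only [eval_mul, eval_C]
  exact intervalIntegral.integral_const_mul c _

lemma intg_sub (P Q : Polynomial ℝ) : intg (P - Q) = intg P - intg Q := by
  have : P - Q = P + C (-1) * Q := by ring_nf; simp [C_neg]; ring
  rw [this, intg_add, intg_Cmul]; ring

lemma intg_deriv (P : Polynomial ℝ) : intg (derivative P) = P.eval 1 - P.eval 0 := by
  unfold intg
  exact intervalIntegral.integral_deriv_eq_sub' _ (funext fun x => (Polynomial.deriv ..))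
    (fun x _ => (P.hasDerivAt x).differentiableAt)
    ((P.derivative.continuous).continuousOn)

lemma intg_sq_nonneg (P : Polynomial ℝ) : 0 ≤ intg (P * P) := by
  unfold intg
  apply intervalIntegral.integral_nonneg (by norm_num)
  intro u _
  simp only [eval_mul]
  exact mul_self_nonneg _

lemma intg_sum {ι : Type*} (s : Finset ι) (f : ι → Polynomial ℝ) :
    intg (∑ i ∈ s, f i) = ∑ i ∈ s, intg (f i) := by
  induction s using Finset.cons_induction with
  | empty => simp [intg_zero]
  | cons a s ha ih => rw [Finset.sum_cons, intg_add, ih, Finset.sum_cons]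

lemma intg_CS (P Q : Polynomial ℝ) : intg (P * Q) ^ 2 ≤ intg (P * P) * intg (Q * Q) := by
  have h : ∀ t : ℝ, 0 ≤ intg (P*P) * (t*t) + (2 * intg (P*Q)) * t + intg (Q*Q) := by
    intro t
    have e : (C t * P + Q) * (C t * P + Q)
        = C (t*t) * (P*P) + (C t * (P*Q) + C t * (P*Q)) + Q*Q := by
      rw [map_mul]; ring
    have h0 := intg_sq_nonneg (C t * P + Q)
    rw [e, intg_add, intg_add, intg_add, intg_Cmul, intg_Cmul] at h0
    nlinarith [h0]
  have hd := discrim_le_zero h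
  rw [discrim] at hd
  nlinarith [hd]

noncomputable def g : Polynomial ℝ := X^2 - X

lemma g_eval0 : g.eval 0 = 0 := by simp [g]
lemma g_eval1 : g.eval 1 = 0 := by simp [g]

lemma g_dvd (i : ℕ) : ∀ j ≤ i, ∃ u : Polynomial ℝ,
    derivative^[j] (g ^ i) = g ^ (i - j) * u := by
  intro j
  induction j with
  | zero => intro _; exact ⟨1, by simp⟩
  | succ j ih =>
    intro hj
    obtain ⟨u, hu⟩ := ih (Nat.le_of_succ_le hj)
    set d := i - (j+1) with hd
    have hij : i - j = d + 1 := by omega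
    refine ⟨C ((d:ℝ)+1) * derivative g * u + g * derivative u, ?_⟩
    rw [Function.iterate_succ_apply', hu, hij, derivative_mul, derivative_pow]
    push_cast
    ring

lemma eval_vanish {i j : ℕ} (h : j < i) {x : ℝ} (hx : g.eval x = 0) :
    (derivative^[j] (g ^ i)).eval x = 0 := by
  obtain ⟨u, hu⟩ := g_dvd i j h.le
  have h2 : i - j = (i - j - 1) + 1 := by omega
  rw [hu, h2]
  simp [pow_succ, hx]

lemma intg_parts (i : ℕ) : ∀ j ≤ i, ∀ s : Polynomial ℝ,
    intg (s * derivative^[j] (g ^ i)) = (-1:ℝ)^j * intg (derivative^[j] s * g ^ i) := by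
  intro j
  induction j with
  | zero => intro _ s; simp
  | succ j ih =>
    intro hj s
    have hji : j ≤ i := Nat.le_of_succ_le hj
    have key : s * derivative^[j+1] (g^i)
        = derivative (s * derivative^[j] (g^i)) - derivative s * derivative^[j] (g^i) := by
      rw [Function.iterate_succ_apply', derivative_mul]; ring
    rw [key, intg_sub, intg_deriv]
    have e1 : (s * derivative^[j] (g^i)).eval 1 = 0 := by
      rw [eval_mul, eval_vanish (Nat.lt_of_succ_le hj) g_eval1, mul_zero]
    have e0 : (s * derivative^[j] (g^i)).eval 0 = 0 := by
      rw [eval_mul, eval_vanish (Nat.lt_of_succ_le hj) g_eval0, mul_zero]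
    rw [e1, e0, ih hji (derivative s), ← Function.iterate_succ_apply]
    ring

lemma intg_X_pow (m : ℕ) : intg (X^m) = 1/((m:ℝ)+1) := by
  unfold intg
  simp only [eval_pow, eval_X]
  rw [integral_pow]
  norm_num

lemma intg_beta : ∀ i m : ℕ,
    intg (X^m * (1 - X)^i) = ((m.factorial : ℝ) * i.factorial) / ((m + i + 1).factorial) := by
  intro i
  induction i with
  | zero =>
    intro m
    rw [pow_zero, mul_one, intg_X_pow, Nat.factorial_succ]
    push_cast
    rw [eq_div_iff (by positivity)]
    field_simp
    simp
  | succ i ih =>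
    intro m
    have key : derivative (X^(m+1) * (1-X)^(i+1))
        = C (((m+1:ℕ)):ℝ) * (X^m * (1-X)^(i+1)) - C (((i+1:ℕ)):ℝ) * (X^(m+1) * (1-X)^i) := by
      simp only [derivative_mul, derivative_pow, derivative_sub, derivative_one,
        derivative_X, Nat.add_sub_cancel]
      ring
    have h0 := intg_deriv (X^(m+1) * (1-X)^(i+1))
    rw [key, intg_sub, intg_Cmul, intg_Cmul] at h0
    have hb : (X^(m+1) * (1-X)^(i+1) : Polynomial ℝ).eval 1 = 0 := by simp
    have hb0 : (X^(m+1) * (1-X)^(i+1) : Polynomial ℝ).eval 0 = 0 := by simp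
    rw [hb, hb0, sub_zero] at h0
    have hih := ih (m+1)
    have hidx : m + 1 + i + 1 = m + (i + 1) + 1 := by omega
    rw [hidx] at hih
    rw [hih] at h0
    -- h0 : 0 = (m+1) * intg (X^m * (1-X)^(i+1)) - (i+1) * ( ((m+1)! * i!) / (m+(i+1)+1)! )
    have hm1 : (0:ℝ) < (m:ℝ) + 1 := by positivity
    push_cast at h0
    have : intg (X^m * (1-X)^(i+1))
        = ((i:ℝ)+1) * (((m+1).factorial : ℝ) * i.factorial / ((m + (i+1) + 1).factorial)) / ((m:ℝ)+1) := by
      field_simp at h0 ⊢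
      linarith
    rw [this, Nat.factorial_succ (m), Nat.factorial_succ i]
    push_cast
    have hfac : (0:ℝ) < ((m + (i+1) + 1).factorial : ℝ) := by positivity
    field_simp

noncomputable def L (i : ℕ) : Polynomial ℝ := derivative^[i] (g ^ i)

lemma g_pow (i : ℕ) : g ^ i = C ((-1:ℝ)^i) * (X^i * (1 - X)^i) := by
  have h : (g : Polynomial ℝ) = C (-1) * (X * (1 - X)) := by
    simp only [g, map_neg, map_one]
    ring
  rw [h, mul_pow, mul_pow, ← map_pow]

lemma intg_mul_g_pow (s : Polynomial ℝ) (i : ℕ) :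
    intg (s * g ^ i) = (-1:ℝ)^i * intg (s * (X^i * (1 - X)^i)) := by
  rw [g_pow]
  rw [show s * (C ((-1:ℝ)^i) * (X^i * (1 - X)^i)) = C ((-1:ℝ)^i) * (s * (X^i * (1-X)^i)) by ring]
  rw [intg_Cmul]

lemma intg_pow_mul_L_of_lt {m i : ℕ} (h : m < i) : intg (X^m * L i) = 0 := by
  rw [L, intg_parts i i le_rfl (X^m),
    iterate_derivative_eq_zero (by simpa [natDegree_X_pow] using h)]
  simp [intg_zero]

lemma intg_pow_mul_L {m i : ℕ} (h : i ≤ m) :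
    intg (X^m * L i) = (m.descFactorial i : ℝ) * ((m.factorial : ℝ) * i.factorial) / ((m + i + 1).factorial) := by
  rw [L, intg_parts i i le_rfl (X^m), iterate_derivative_X_pow_eq_smul,
    smul_mul_assoc, smul_eq_C_mul, intg_Cmul, intg_mul_g_pow,
    show (X^(m-i) * (X^i * (1-X)^i) : Polynomial ℝ) = X^(m-i+i) * (1-X)^i by rw [pow_add]; ring,
    Nat.sub_add_cancel h, intg_beta]
  have hs : ((-1:ℝ)^i * (-1:ℝ)^i) = 1 := by
    rw [← mul_pow]; norm_num
  linear_combination ((m.descFactorial i:ℝ) * ((m.factorial:ℝ) * i.factorial / ((m+i+1).factorial:ℝ))) * hs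

noncomputable def K (k : ℕ) : Polynomial ℝ :=
  ∑ i ∈ range (k+1), C ((2*(i:ℝ)+1) / i.factorial) * L i

lemma telescope (V : ℕ → ℝ) (n : ℕ) : ∑ i ∈ range n, (V i - V (i+1)) = V 0 - V n := by
  induction n with
  | zero => simp
  | succ n ih => rw [Finset.sum_range_succ, ih]; ring

lemma intg_pow_mul_K {k m : ℕ} (hm : m ≤ k) : intg (X^m * K k) = 1 := by
  rw [K, Finset.mul_sum]
  have e : ∀ i : ℕ, (X:Polynomial ℝ)^m * (C ((2*(i:ℝ)+1) / i.factorial) * L i)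
      = C ((2*(i:ℝ)+1) / i.factorial) * (X^m * L i) := fun (i:ℕ) => by ring
  simp only [e]
  rw [intg_sum]
  simp only [intg_Cmul]
  -- restrict the sum to range (m+1)
  rw [show range (k+1) = range (m+1) ∪ (range (k+1) \ range (m+1)) by
      rw [Finset.union_sdiff_of_subset (by exact Finset.range_subset_range.mpr (by omega))] ]
  rw [Finset.sum_union (Finset.disjoint_sdiff)]
  have hz : ∑ i ∈ range (k+1) \ range (m+1), (2*(i:ℝ)+1) / i.factorial * intg (X^m * L i) = 0 := by
    apply Finset.sum_eq_zero
    intro i hi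
    simp only [Finset.mem_sdiff, Finset.mem_range] at hi
    rw [intg_pow_mul_L_of_lt (by omega), mul_zero]
  rw [hz, add_zero]
  -- now the telescoping identity
  set V : ℕ → ℝ := fun j => if j ≤ m then ((m.factorial:ℝ))^2 / (((m-j).factorial : ℝ) * ((m+j).factorial : ℝ)) else 0 with hV
  have hterm : ∀ i ∈ range (m+1), (2*(i:ℝ)+1) / i.factorial * intg (X^m * L i) = V i - V (i+1) := by
    intro i hi
    rw [Finset.mem_range] at hi
    have him : i ≤ m := by omega
    rw [intg_pow_mul_L him]
    have hdesc : ((m - i).factorial : ℝ) * (m.descFactorial i : ℝ) = (m.factorial : ℝ) := by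
      rw [← Nat.cast_mul, Nat.factorial_mul_descFactorial him]
    rcases Nat.lt_or_ge i m with hlt | hge
    · -- i < m
      have hVi : V i = ((m.factorial:ℝ))^2 / (((m-i).factorial : ℝ) * ((m+i).factorial : ℝ)) := by
        rw [hV]; simp [him]
      have hVi1 : V (i+1) = ((m.factorial:ℝ))^2 / (((m-(i+1)).factorial : ℝ) * ((m+(i+1)).factorial : ℝ)) := by
        rw [hV]; simp [Nat.succ_le_of_lt hlt]
      have hd : (m.descFactorial i : ℝ) = (m.factorial:ℝ) / (((m-i).factorial : ℝ)) := by
        rw [eq_div_iff (by positivity), mul_comm]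
        exact hdesc
      rw [hVi, hVi1, hd]
      have h1 : (m - i) = (m - (i+1)) + 1 := by omega
      have h2 : (m + (i+1)) = (m + i) + 1 := by omega
      have hi1m : i + 1 ≤ m := hlt
      rw [h1, h2, Nat.factorial_succ, Nat.factorial_succ]
      have n1 : (i.factorial:ℝ) ≠ 0 := by positivity
      have n2 : ((m-(i+1)).factorial:ℝ) ≠ 0 := by positivity
      have n3 : ((m+i).factorial:ℝ) ≠ 0 := by positivity
      push_cast [Nat.cast_sub hi1m]
      have n4 : (m:ℝ) - (i:ℝ) ≠ 0 := by
        have : (i:ℝ) < (m:ℝ) := by exact_mod_cast hlt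
        intro hcon; linarith
      have n5 : (m:ℝ) + (i:ℝ) + 1 ≠ 0 := by positivity
      have n6 : (m:ℝ) - ((i:ℝ) + 1) + 1 ≠ 0 := by
        intro hcon; apply n4; linarith
      field_simp
      ring
    · -- i = m
      have him' : i = m := by omega
      subst him'
      have hVi : V i = ((i.factorial:ℝ))^2 / (((0).factorial : ℝ) * ((i+i).factorial : ℝ)) := by
        rw [hV]; simp
      have hVi1 : V (i+1) = 0 := by
        rw [hV]; simp
      rw [hVi, hVi1, sub_zero]
      have h2 : (i + i + 1) = (i + i) + 1 := rfl
      rw [h2, Nat.factorial_succ]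
      have hd : (i.descFactorial i : ℝ) = (i.factorial : ℝ) := by
        rw [Nat.descFactorial_self]
      rw [hd]
      have hfi : (0:ℝ) < (i.factorial : ℝ) := by positivity
      have hfii : (0:ℝ) < ((i+i).factorial : ℝ) := by positivity
      field_simp
      push_cast
      ring
  rw [Finset.sum_congr rfl hterm, telescope]
  have hV0 : V 0 = 1 := by
    rw [hV]; simp
    rw [sq, div_self (by positivity)]
  have hVm : V (m+1) = 0 := by rw [hV]; simp
  rw [hV0, hVm, sub_zero]

lemma monic_g : g.Monic := by
  have : degree (X : Polynomial ℝ) < (2:ℕ) := by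
    simpa using degree_X_lt_degree_X_pow (R := ℝ) (by norm_num : 1 < 2)
  exact monic_X_pow_sub this

lemma natDegree_g : g.natDegree = 2 := by
  unfold g; compute_degree!

lemma natDegree_g_pow (i : ℕ) : (g ^ i).natDegree = 2 * i := by
  rw [natDegree_pow, natDegree_g]; ring

lemma natDegree_L_le (i : ℕ) : (L i).natDegree ≤ i := by
  have h := natDegree_iterate_derivative (g ^ i) i
  rw [natDegree_g_pow] at h
  unfold L
  omega

lemma intg_L_mul_L_of_ne {i j : ℕ} (hij : i < j) : intg (L i * L j) = 0 := by
  have h := intg_parts j j le_rfl (L i)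
  rw [iterate_derivative_eq_zero (lt_of_le_of_lt (natDegree_L_le i) hij)] at h
  have hz : intg ((0:Polynomial ℝ) * g ^ j) = 0 := by rw [zero_mul, intg_zero]
  rw [hz, mul_zero] at h
  exact h

lemma coeff_g_pow_top (i : ℕ) : (g ^ i).coeff (2 * i) = 1 := by
  have hm : (g ^ i).Monic := monic_g.pow i
  have := hm.coeff_natDegree
  rwa [natDegree_g_pow] at this

lemma iterate_derivative_g_pow (i : ℕ) :
    derivative^[2 * i] (g ^ i) = C (((2 * i).factorial : ℝ)) := by
  have hdeg : (derivative^[2 * i] (g ^ i)).natDegree ≤ 0 := by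
    have h := natDegree_iterate_derivative (g ^ i) (2 * i)
    rw [natDegree_g_pow] at h
    omega
  have hc := Polynomial.eq_C_of_natDegree_le_zero hdeg
  rw [hc, coeff_iterate_derivative, zero_add, coeff_g_pow_top, Nat.descFactorial_self]
  simp

lemma intg_L_sq (i : ℕ) : intg (L i * L i) = ((i.factorial : ℝ))^2 / (2*(i:ℝ)+1) := by
  have h := intg_parts i i le_rfl (L i)
  rw [show L i * derivative^[i] (g ^ i) = L i * L i by rw [L]] at h
  have h2 : derivative^[i] (L i) = C (((2 * i).factorial : ℝ)) := by
    rw [L, ← Function.iterate_add_apply, show i + i = 2 * i by ring, iterate_derivative_g_pow]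
  rw [h2] at h
  rw [show C (((2*i).factorial : ℝ)) * g ^ i = C (((2*i).factorial : ℝ)) * (1 * g ^ i) by ring] at h
  rw [intg_Cmul, intg_mul_g_pow, show (1 : Polynomial ℝ) * (X^i * (1-X)^i) = X^i * (1-X)^i by ring,
    intg_beta] at h
  have hs : ((-1:ℝ)^i * (-1:ℝ)^i) = 1 := by rw [← mul_pow]; norm_num
  set Z : ℝ := (i.factorial : ℝ) * (i.factorial : ℝ) / ((i + i + 1).factorial : ℝ) with hZ
  have h' : intg (L i * L i) = ((2*i).factorial : ℝ) * Z := by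
    linear_combination h + (((2*i).factorial : ℝ) * Z) * hs
  have hfac : ((i + i + 1).factorial : ℝ) = (2*(i:ℝ)+1) * ((2 * i).factorial : ℝ) := by
    rw [show i + i + 1 = (2*i) + 1 by ring, Nat.factorial_succ]
    push_cast; ring
  rw [h', hZ, hfac]
  have n1 : ((2*i).factorial : ℝ) ≠ 0 := by positivity
  have n2 : (2*(i:ℝ)+1) ≠ 0 := by positivity
  field_simp

lemma sum_odds (k : ℕ) : ∑ i ∈ range k, (2*(i:ℝ)+1) = (k:ℝ)^2 := by
  induction k with
  | zero => simp
  | succ k ih => rw [Finset.sum_range_succ, ih]; push_cast; ring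

lemma intg_K_sq (k : ℕ) : intg (K k * K k) = ((k:ℝ)+1)^2 := by
  rw [K, Finset.sum_mul_sum]
  rw [intg_sum]
  have hterm : ∀ i ∈ range (k+1),
      intg (∑ j ∈ range (k+1), (C ((2*(i:ℝ)+1) / i.factorial) * L i) * (C ((2*(j:ℝ)+1) / j.factorial) * L j))
      = 2*(i:ℝ)+1 := by
    intro i hi
    rw [Finset.mem_range] at hi
    rw [intg_sum]
    rw [Finset.sum_eq_single i]
    · rw [show (C ((2*(i:ℝ)+1) / i.factorial) * L i) * (C ((2*(i:ℝ)+1) / i.factorial) * L i)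
          = C ((2*(i:ℝ)+1) / i.factorial) * (C ((2*(i:ℝ)+1) / i.factorial) * (L i * L i)) by ring,
        intg_Cmul, intg_Cmul, intg_L_sq]
      have n1 : ((i.factorial : ℝ)) ≠ 0 := by positivity
      have n2 : (2*(i:ℝ)+1) ≠ 0 := by positivity
      field_simp
    · intro j hj hji
      rcases Nat.lt_or_ge i j with h | h
      · rw [show (C ((2*(i:ℝ)+1) / i.factorial) * L i) * (C ((2*(j:ℝ)+1) / j.factorial) * L j)
            = C ((2*(i:ℝ)+1) / i.factorial) * (C ((2*(j:ℝ)+1) / j.factorial) * (L i * L j)) by ring,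
          intg_Cmul, intg_Cmul, intg_L_mul_L_of_ne h, mul_zero, mul_zero]
      · have h' : j < i := by omega
        rw [show (C ((2*(i:ℝ)+1) / i.factorial) * L i) * (C ((2*(j:ℝ)+1) / j.factorial) * L j)
            = C ((2*(i:ℝ)+1) / i.factorial) * (C ((2*(j:ℝ)+1) / j.factorial) * (L j * L i)) by ring,
          intg_Cmul, intg_Cmul, intg_L_mul_L_of_ne h', mul_zero, mul_zero]
    · intro hcon
      exact absurd (Finset.mem_range.mpr (by omega : i < k + 1)) hcon
  rw [Finset.sum_congr rfl hterm, sum_odds]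
  push_cast
  ring

lemma intg_r_mul_K {k : ℕ} {r : Polynomial ℝ} (hr : r.natDegree ≤ k) :
    intg (r * K k) = r.eval 1 := by
  have hlt : r.natDegree < k + 1 := by omega
  conv_lhs => rw [r.as_sum_range' (k+1) hlt]
  rw [Finset.sum_mul, intg_sum]
  have hterm : ∀ m ∈ range (k+1),
      intg ((monomial m (r.coeff m)) * K k) = r.coeff m := by
    intro m hm
    rw [Finset.mem_range] at hm
    rw [← C_mul_X_pow_eq_monomial, mul_assoc, intg_Cmul, intg_pow_mul_K (by omega), mul_one]
  rw [Finset.sum_congr rfl hterm, Polynomial.eval_eq_sum_range' hlt]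
  simp

lemma trace01 {k : ℕ} {r : Polynomial ℝ} (hr : r.natDegree ≤ k) :
    (r.eval 1)^2 ≤ ((k:ℝ)+1)^2 * intg (r * r) := by
  have h := intg_CS r (K k)
  rw [intg_r_mul_K hr, intg_K_sq] at h
  nlinarith [h, intg_sq_nonneg r]

lemma traceab {k : ℕ} {r : Polynomial ℝ} (hr : r.natDegree ≤ k) {a b : ℝ} (hab : a < b) :
    (r.eval b)^2 * (b - a) ≤ ((k:ℝ)+1)^2 * ∫ x in a..b, (r.eval x)^2 := by
  set s : Polynomial ℝ := r.comp (C a + C (b - a) * X) with hs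
  have hsdeg : s.natDegree ≤ k := by
    refine le_trans natDegree_comp_le ?_
    have h1 : (C a + C (b - a) * X : Polynomial ℝ).natDegree ≤ 1 := by
      refine le_trans (natDegree_add_le _ _) (max_le ?_ ?_)
      · simp
      · exact le_trans (natDegree_C_mul_le _ _) natDegree_X_le
    calc r.natDegree * (C a + C (b-a)*X : Polynomial ℝ).natDegree
        ≤ r.natDegree * 1 := Nat.mul_le_mul_left _ h1
      _ = r.natDegree := by ring
      _ ≤ k := hr
  have hseval : ∀ t : ℝ, s.eval t = r.eval (a + (b - a) * t) := by
    intro t; rw [hs, eval_comp]; simp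
  have hsI : intg (s * s) = (b - a)⁻¹ * ∫ x in a..b, (r.eval x)^2 := by
    unfold intg
    have h1 : ∀ t : ℝ, (s * s).eval t = (fun x => (r.eval x)^2) (a + (b - a) * t) := by
      intro t; simp [eval_mul, hseval, sq]
    rw [intervalIntegral.integral_congr (g := fun t => (fun x => (r.eval x)^2) (a + (b-a)*t))
      (fun t _ => h1 t)]
    rw [intervalIntegral.integral_comp_add_mul (fun x => (r.eval x)^2) (sub_ne_zero.mpr hab.ne') a]
    rw [smul_eq_mul]
    congr 1 <;> ring
  have ht := trace01 (k := k) hsdeg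
  rw [hseval 1, show a + (b - a) * 1 = b by ring, hsI] at ht
  have hba : 0 < b - a := sub_pos.mpr hab
  calc (r.eval b)^2 * (b - a) ≤ (((k:ℝ)+1)^2 * ((b-a)⁻¹ * ∫ x in a..b, (r.eval x)^2)) * (b - a) := by
        exact mul_le_mul_of_nonneg_right ht hba.le
    _ = ((k:ℝ)+1)^2 * ∫ x in a..b, (r.eval x)^2 := by
        field_simp

lemma traceab' {k : ℕ} {r : Polynomial ℝ} (hr : r.natDegree ≤ k) {b c : ℝ} (hbc : b < c) :
    (r.eval b)^2 * (c - b) ≤ ((k:ℝ)+1)^2 * ∫ x in b..c, (r.eval x)^2 := by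
  set s : Polynomial ℝ := r.comp (C c + C (b - c) * X) with hs
  have hsdeg : s.natDegree ≤ k := by
    refine le_trans natDegree_comp_le ?_
    have h1 : (C c + C (b - c) * X : Polynomial ℝ).natDegree ≤ 1 := by
      refine le_trans (natDegree_add_le _ _) (max_le ?_ ?_)
      · simp
      · exact le_trans (natDegree_C_mul_le _ _) natDegree_X_le
    calc r.natDegree * (C c + C (b-c)*X : Polynomial ℝ).natDegree
        ≤ r.natDegree * 1 := Nat.mul_le_mul_left _ h1
      _ = r.natDegree := by ring
      _ ≤ k := hr
  have hseval : ∀ t : ℝ, s.eval t = r.eval (c + (b - c) * t) := by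
    intro t; rw [hs, eval_comp]; simp
  have hbc' : b - c ≠ 0 := sub_ne_zero.mpr hbc.ne
  have hsI : intg (s * s) = (c - b)⁻¹ * ∫ x in b..c, (r.eval x)^2 := by
    unfold intg
    have h1 : ∀ t : ℝ, (s * s).eval t = (fun x => (r.eval x)^2) (c + (b - c) * t) := by
      intro t; simp [eval_mul, hseval, sq]
    rw [intervalIntegral.integral_congr (g := fun t => (fun x => (r.eval x)^2) (c + (b-c)*t))
      (fun t _ => h1 t)]
    rw [intervalIntegral.integral_comp_add_mul (fun x => (r.eval x)^2) hbc' c]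
    rw [smul_eq_mul]
    rw [show c + (b-c) * 0 = c by ring, show c + (b-c) * 1 = b by ring]
    rw [intervalIntegral.integral_symm b c]
    have h2 : (c - b) ≠ 0 := sub_ne_zero.mpr hbc.ne'
    field_simp
    ring
  have ht := trace01 (k := k) hsdeg
  rw [hseval 1, show c + (b - c) * 1 = b by ring, hsI] at ht
  have hba : 0 < c - b := sub_pos.mpr hbc
  calc (r.eval b)^2 * (c - b) ≤ (((k:ℝ)+1)^2 * ((c-b)⁻¹ * ∫ x in b..c, (r.eval x)^2)) * (c - b) := by
        exact mul_le_mul_of_nonneg_right ht hba.le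
    _ = ((k:ℝ)+1)^2 * ∫ x in b..c, (r.eval x)^2 := by
        field_simp

lemma young_abs (N Mp Ip α μ D H P J η : ℝ) (hN : 1 ≤ N) (hMp : 0 < Mp) (hα : 0 < α)
    (hIp : 0 ≤ Ip) (hμ : 0 < μ) (hμle : μ ≤ 2*Mp) (hH : 0 < H) (hHle : H ≤ 2*α)
    (hDH : D * H = μ) (htr : P^2*α ≤ N*Ip) (hη : 8*N ≤ η) :
    μ*P*J ≤ (1/2)*(Mp*Ip) + (η/4)*(D*J^2) := by
  have hD : 0 < D := by
    have := hDH
    nlinarith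
  have hN0 : 0 < N := by linarith
  -- key bound : μ^2 ≤ 4*Mp*α*D
  have hkey : μ^2 ≤ 4*Mp*α*D := by
    have h1 : μ * H ≤ 4*Mp*α := by nlinarith
    have h2 : D * (μ * H) ≤ D * (4*Mp*α) := mul_le_mul_of_nonneg_left h1 hD.le
    calc μ^2 = D * (μ * H) := by rw [mul_comm μ H, ← mul_assoc, hDH]; ring
      _ ≤ D * (4*Mp*α) := h2
      _ = 4*Mp*α*D := by ring
  nlinarith [sq_nonneg (Mp*α*P - N*μ*J), mul_le_mul_of_nonneg_left htr (by positivity : (0:ℝ) ≤ Mp*α),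
    mul_le_mul_of_nonneg_left hkey (by positivity : (0:ℝ) ≤ N*J^2),
    mul_le_mul_of_nonneg_right hη (by positivity : (0:ℝ) ≤ D*J^2),
    mul_pos hMp hα, mul_pos hN0 (mul_pos hMp hα)]

end SWIPAux

set_option maxHeartbeats 1000000 in
open SWIPAux in
/-- One-dimensional two-element coercivity of the SWIP form: for polynomials
`p`, `q` of degree at most `n ≥ 1` on the elements `[a,b]`, `[b,c]` with
positive mobilities `m⁺`, `m⁻`, harmonic average `⟨⟨m⟩⟩`, face width `h`,
jump `J` and average derivative `A`, the form
`b = m⁺∫(p')² + m⁻∫(q')² + (η⟨⟨m⟩⟩/h)J² - 2⟨⟨m⟩⟩AJ` is bounded below by one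
half of the squared DG semi-norm whenever `η ≥ 8n²`. -/
theorem swip_two_element_coercivity (n : ℕ) (hn : 1 ≤ n) (a b c : ℝ)
    (hab : a < b) (hbc : b < c)
    (p q : Polynomial ℝ) (hp : p.degree ≤ (n : ℕ∞)) (hq : q.degree ≤ (n : ℕ∞))
    (mp mm : ℝ) (hmp : 0 < mp) (hmm : 0 < mm)
    (η : ℝ) (hη : 8 * (n : ℝ) ^ 2 ≤ η) :
    (1 / 2) * (mp * (∫ x in a..b, (p.derivative.eval x) ^ 2)
        + mm * (∫ x in b..c, (q.derivative.eval x) ^ 2)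
        + (η * (2 * mp * mm / (mp + mm)) / (2 * (b - a) * (c - b) / ((b - a) + (c - b))))
            * (p.eval b - q.eval b) ^ 2) ≤
      mp * (∫ x in a..b, (p.derivative.eval x) ^ 2)
        + mm * (∫ x in b..c, (q.derivative.eval x) ^ 2)
        + (η * (2 * mp * mm / (mp + mm)) / (2 * (b - a) * (c - b) / ((b - a) + (c - b))))
            * (p.eval b - q.eval b) ^ 2
        - 2 * (2 * mp * mm / (mp + mm))
            * ((p.derivative.eval b + q.derivative.eval b) / 2)
            * (p.eval b - q.eval b) := by
  have hpn : p.natDegree ≤ n := natDegree_le_iff_degree_le.mpr (by exact_mod_cast hp)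
  have hqn : q.natDegree ≤ n := natDegree_le_iff_degree_le.mpr (by exact_mod_cast hq)
  have hp' : (derivative p).natDegree ≤ n - 1 :=
    le_trans (natDegree_derivative_le p) (by omega)
  have hq' : (derivative q).natDegree ≤ n - 1 :=
    le_trans (natDegree_derivative_le q) (by omega)
  have hcast : ((n - 1 : ℕ) : ℝ) + 1 = (n : ℝ) := by
    have h : n - 1 + 1 = n := by omega
    exact_mod_cast congrArg (Nat.cast (R := ℝ)) h
  have htrp := traceab hp' hab
  have htrq := traceab' hq' hbc
  rw [hcast] at htrp htrq
  have hIp : 0 ≤ ∫ x in a..b, (p.derivative.eval x)^2 :=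
    intervalIntegral.integral_nonneg hab.le (fun u _ => sq_nonneg _)
  have hIq : 0 ≤ ∫ x in b..c, (q.derivative.eval x)^2 :=
    intervalIntegral.integral_nonneg hbc.le (fun u _ => sq_nonneg _)
  have hα : 0 < b - a := sub_pos.mpr hab
  have hβ : 0 < c - b := sub_pos.mpr hbc
  set μ : ℝ := 2 * mp * mm / (mp + mm) with hμdef
  set H : ℝ := 2 * (b - a) * (c - b) / ((b - a) + (c - b)) with hHdef
  have hμ : 0 < μ := by rw [hμdef]; positivity
  have hH : 0 < H := by rw [hHdef]; positivity
  have hμle1 : μ ≤ 2 * mp := by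
    rw [hμdef, div_le_iff₀ (by positivity)]; nlinarith
  have hμle2 : μ ≤ 2 * mm := by
    rw [hμdef, div_le_iff₀ (by positivity)]; nlinarith
  have hHle1 : H ≤ 2 * (b - a) := by
    rw [hHdef, div_le_iff₀ (by positivity)]; nlinarith
  have hHle2 : H ≤ 2 * (c - b) := by
    rw [hHdef, div_le_iff₀ (by positivity)]; nlinarith
  have hDH : (μ / H) * H = μ := div_mul_cancel₀ μ hH.ne'
  have hN : (1:ℝ) ≤ (n:ℝ)^2 := by
    have : (1:ℝ) ≤ (n:ℝ) := by exact_mod_cast hn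
    nlinarith
  have y1 := young_abs ((n:ℝ)^2) mp (∫ x in a..b, (p.derivative.eval x)^2) (b - a) μ (μ/H) H
    (p.derivative.eval b) (p.eval b - q.eval b) η hN hmp hα hIp hμ hμle1 hH hHle1 hDH htrp hη
  have y2 := young_abs ((n:ℝ)^2) mm (∫ x in b..c, (q.derivative.eval x)^2) (c - b) μ (μ/H) H
    (q.derivative.eval b) (p.eval b - q.eval b) η hN hmm hβ hIq hμ hμle2 hH hHle2 hDH htrq hη
  have hcomb : (η/4)*((μ/H)*(p.eval b - q.eval b)^2) + (η/4)*((μ/H)*(p.eval b - q.eval b)^2)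
      = (1/2)*((η * μ / H) * (p.eval b - q.eval b)^2) := by ring
  linarith [y1, y2]
end
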